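/- arXiv:1201.3057 — 2 statements merged into one kernel-verified Lean document; each statement's English description precedes it below -/
import Mathlib

section
/- In the ring of formal power series over ℚ in one variable t, the infinite product ∏_{i≥1} (1 - t^i)^{L_q(i)} equals 1 - q·t, where L_q(i) = (1/i) Σ_{d|i} μ(d) q^{i/d}. -/
open ArithmeticFunction Finset PowerSeries

noncomputable def gD (L : ℕ → ℕ) (i : ℕ) : ℚ⟦X⟧ :=
  PowerSeries.mk fun n => if i ∣ n + 1 then -((i * L i : ℕ) : ℚ) else 0

noncomputable def gG (q : ℕ) : ℚ⟦X⟧ :=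
  PowerSeries.mk fun n => -((q : ℚ)) ^ (n + 1)

lemma gD_mul (L : ℕ → ℕ) (i : ℕ) (hi : 1 ≤ i) :
    gD L i * (1 - X ^ i) = PowerSeries.C (-((i * L i : ℕ) : ℚ)) * X ^ (i - 1) := by
  ext n
  rw [mul_sub, mul_one, map_sub, coeff_mul_X_pow', coeff_mul_X_pow', gD]
  simp only [coeff_mk, coeff_C]
  rcases lt_trichotomy n (i - 1) with h | h | h
  · rw [if_neg (fun hd => by have := Nat.le_of_dvd (by omega) hd; omega),
      if_neg (by omega : ¬ i ≤ n), if_neg (by omega : ¬ i - 1 ≤ n)]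
    ring
  · have hni : n + 1 = i := by omega
    rw [hni, if_pos dvd_rfl, if_neg (by omega : ¬ i ≤ n),
      if_pos (by omega : i - 1 ≤ n), if_pos (by omega : n - (i - 1) = 0)]
    ring
  · have hdv : (i ∣ n + 1) ↔ (i ∣ n - i + 1) := by
      constructor
      · intro hd
        have he : n - i + 1 = n + 1 - i := by omega
        rw [he]; exact Nat.dvd_sub hd dvd_rfl
      · intro hd
        have he : n + 1 = (n - i + 1) + i := by omega
        rw [he]; exact Nat.dvd_add hd dvd_rfl
    rw [if_pos (by omega : i ≤ n), if_pos (by omega : i - 1 ≤ n),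
      if_neg (by omega : ¬ n - (i - 1) = 0)]
    by_cases hd : i ∣ n + 1
    · rw [if_pos hd, if_pos (hdv.mp hd)]; ring
    · rw [if_neg hd, if_neg (fun h' => hd (hdv.mpr h'))]; ring

lemma deriv_one_sub_X_pow (i : ℕ) (hi : 1 ≤ i) :
    d⁄dX ℚ (1 - X ^ i : ℚ⟦X⟧) = PowerSeries.C (-(i : ℚ)) * X ^ (i - 1) := by
  rw [map_sub, Derivation.map_one_eq_zero, Derivation.leibniz_pow, derivative_X, zero_sub]
  simp only [smul_eq_mul, mul_one, nsmul_eq_mul, map_neg, map_natCast]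
  ring

lemma deriv_factor (L : ℕ → ℕ) (i : ℕ) (hi : 1 ≤ i) :
    d⁄dX ℚ ((1 - X ^ i) ^ L i) = gD L i * (1 - X ^ i) ^ L i := by
  rcases Nat.eq_zero_or_pos (L i) with h0 | hpos
  · rw [h0, pow_zero, Derivation.map_one_eq_zero]
    have : gD L i = 0 := by
      ext n; rw [gD, coeff_mk, _root_.map_zero]
      split <;> simp [h0]
    rw [this, zero_mul]
  · have hp : (1 - X ^ i : ℚ⟦X⟧) ^ L i = (1 - X ^ i) ^ (L i - 1) * (1 - X ^ i) := by
      rw [← pow_succ]; congr 1; omega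
    rw [Derivation.leibniz_pow, deriv_one_sub_X_pow i hi]
    conv_rhs => rw [hp]
    have : gD L i * ((1 - X ^ i) ^ (L i - 1) * (1 - X ^ i)) =
        (gD L i * (1 - X ^ i)) * (1 - X ^ i) ^ (L i - 1) := by ring
    rw [this, gD_mul L i hi,
      show (-((i * L i : ℕ) : ℚ)) = (L i : ℚ) * (-(i : ℚ)) by push_cast; ring,
      map_mul, map_natCast]
    simp only [smul_eq_mul, nsmul_eq_mul]
    ring

lemma deriv_prod (L : ℕ → ℕ) (s : Finset ℕ) (hs : ∀ i ∈ s, 1 ≤ i) :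
    d⁄dX ℚ (∏ i ∈ s, (1 - X ^ i) ^ L i) =
      (∑ i ∈ s, gD L i) * ∏ i ∈ s, (1 - X ^ i) ^ L i := by
  induction s using Finset.cons_induction with
  | empty => simp [Derivation.map_one_eq_zero]
  | cons a s ha ih =>
    rw [Finset.prod_cons, Finset.sum_cons, Derivation.leibniz,
      deriv_factor L a (hs a (Finset.mem_cons_self a s)),
      ih (fun i hi => hs i (Finset.mem_cons_of_mem hi))]
    simp only [smul_eq_mul]
    ring

lemma deriv_G (q : ℕ) :
    d⁄dX ℚ (1 - PowerSeries.C (q : ℚ) * X) =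
      gG q * (1 - PowerSeries.C (q : ℚ) * X) := by
  rw [map_sub, Derivation.map_one_eq_zero, Derivation.leibniz, derivative_X, derivative_C]
  ext n
  simp only [zero_sub, smul_eq_mul, mul_one, smul_zero, add_zero, map_neg, mul_sub, mul_one,
    map_sub]
  rw [gG, coeff_mk]
  have hX : (coeff n) (PowerSeries.mk (fun n => -(q : ℚ) ^ (n + 1)) * (PowerSeries.C (q : ℚ) * X)) =
      if 1 ≤ n then -(q : ℚ) ^ (n - 1 + 1) * q else 0 := by
    rw [show (PowerSeries.mk (fun n => -(q : ℚ) ^ (n + 1)) * (PowerSeries.C (q : ℚ) * X)) =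
      (PowerSeries.mk (fun n => -(q : ℚ) ^ (n + 1)) * PowerSeries.C (q : ℚ)) * X ^ 1 by ring,
      coeff_mul_X_pow', coeff_mul_C, coeff_mk]
  rw [hX]
  simp only [mul_zero, add_zero]
  rcases Nat.eq_zero_or_pos n with h0 | hpos
  · subst h0
    simp [coeff_C]
  · rw [if_pos (by omega : 1 ≤ n), coeff_C, if_neg (by omega), show n - 1 + 1 = n by omega]
    ring

lemma sum_div_mul (q : ℕ) (L : ℕ → ℕ)
    (hL : ∀ i, 1 ≤ i →
      (L i : ℚ) = (1 / i) * ∑ d ∈ i.divisors, (moebius d : ℚ) * (q : ℚ) ^ (i / d)) :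
    ∀ n : ℕ, 0 < n → ∑ i ∈ n.divisors, ((i : ℚ) * (L i : ℚ)) = (q : ℚ) ^ n := by
  rw [ArithmeticFunction.sum_eq_iff_sum_smul_moebius_eq]
  intro n hn
  rw [Nat.sum_divisorsAntidiagonal (f := fun d m => (moebius d) • ((q : ℚ) ^ m))]
  have hLn := hL n hn
  have hn0 : (n : ℚ) ≠ 0 := Nat.cast_ne_zero.mpr (by omega)
  rw [hLn]
  simp only [zsmul_eq_mul]
  field_simp

lemma coeff_sum_gD (q : ℕ) (L : ℕ → ℕ)
    (hL : ∀ i, 1 ≤ i →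
      (L i : ℚ) = (1 / i) * ∑ d ∈ i.divisors, (moebius d : ℚ) * (q : ℚ) ^ (i / d))
    (N m : ℕ) (hm : m < N) :
    PowerSeries.coeff m (∑ i ∈ Finset.Icc 1 N, gD L i) = -(q : ℚ) ^ (m + 1) := by
  rw [map_sum]
  simp only [gD, coeff_mk]
  rw [← Finset.sum_filter]
  have hset : (Finset.Icc 1 N).filter (· ∣ m + 1) = (m + 1).divisors := by
    ext i
    simp only [Finset.mem_filter, Finset.mem_Icc, Nat.mem_divisors]
    constructor
    · rintro ⟨⟨h1, h2⟩, h3⟩; exact ⟨h3, by omega⟩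
    · rintro ⟨h1, -⟩
      have := Nat.le_of_dvd (by omega) h1
      have : 1 ≤ i := Nat.pos_of_dvd_of_pos h1 (by omega)
      refine ⟨⟨this, ?_⟩, h1⟩
      have := Nat.le_of_dvd (by omega) h1
      omega
  rw [hset, ← sum_div_mul q L hL (m + 1) (by omega), ← Finset.sum_neg_distrib]
  apply Finset.sum_congr rfl
  intro i hi
  push_cast
  ring

/-- In `ℚ[[t]]` one has `∏_{i ≥ 1} (1 - t^i)^(L_q(i)) = 1 - q·t`, where
`L_q(i) = (1/i) ∑_{d ∣ i} μ(d) q^(i/d)` is a nonnegative integer. The infinite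
product converges t-adically since the `i`-th factor is `≡ 1 mod t^i`; we express
the identity by saying that every coefficient of degree `k ≤ N` of the partial
product over `1 ≤ i ≤ N` agrees with the corresponding coefficient of `1 - q·t`. -/
theorem stmt_1 (q : ℕ) (hq : 0 < q) (L : ℕ → ℕ)
    (hL : ∀ i, 1 ≤ i →
      (L i : ℚ) = (1 / i) * ∑ d ∈ i.divisors, (moebius d : ℚ) * (q : ℚ) ^ (i / d))
    (N k : ℕ) (hk : k ≤ N) :
    PowerSeries.coeff k (∏ i ∈ Finset.Icc 1 N, (1 - (PowerSeries.X : ℚ⟦X⟧) ^ i) ^ (L i)) =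
      PowerSeries.coeff k (1 - PowerSeries.C (q : ℚ) * PowerSeries.X) := by
  set P : ℚ⟦X⟧ := ∏ i ∈ Finset.Icc 1 N, (1 - (PowerSeries.X : ℚ⟦X⟧) ^ i) ^ (L i) with hPdef
  set G : ℚ⟦X⟧ := 1 - PowerSeries.C (q : ℚ) * PowerSeries.X with hGdef
  set h : ℚ⟦X⟧ := ∑ i ∈ Finset.Icc 1 N, gD L i with hhdef
  have hP : d⁄dX ℚ P = h * P :=
    deriv_prod L _ (fun i hi => (Finset.mem_Icc.mp hi).1)
  have hDeq : d⁄dX ℚ (P - G) = h * (P - G) + (h - gG q) * G := by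
    rw [map_sub, hP, deriv_G]
    ring
  have hc0 : PowerSeries.constantCoeff (P - G) = 0 := by
    rw [map_sub, hPdef, hGdef, map_prod]
    rw [Finset.prod_eq_one (fun i hi => ?_)]
    · simp
    · have h1 : 1 ≤ i := (Finset.mem_Icc.mp hi).1
      rw [map_pow, map_sub, map_one, map_pow, constantCoeff_X, zero_pow (by omega), sub_zero,
        one_pow]
  have key : ∀ m : ℕ, m ≤ N → PowerSeries.coeff m (P - G) = 0 := by
    intro m
    induction m using Nat.strong_induction_on with
    | _ m ih =>
      intro hmN
      match m with
      | 0 => rw [coeff_zero_eq_constantCoeff]; exact hc0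
      | m + 1 =>
        have h1 : PowerSeries.coeff (m + 1) (P - G) * (m + 1) = 0 := by
          rw [← coeff_derivative, hDeq, map_add, coeff_mul, coeff_mul]
          rw [Finset.sum_eq_zero, Finset.sum_eq_zero, add_zero]
          · intro p hp
            have hple := Finset.HasAntidiagonal.antidiagonal.fst_le hp
            have : PowerSeries.coeff p.1 (h - gG q) = 0 := by
              rw [map_sub, hhdef, coeff_sum_gD q L hL N p.1 (by omega), gG, coeff_mk, sub_self]
            rw [this, zero_mul]
          · intro p hp
            have hple := Finset.HasAntidiagonal.antidiagonal.snd_le hp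
            have : PowerSeries.coeff p.2 (P - G) = 0 := ih p.2 (by omega) (by omega)
            rw [this, mul_zero]
        have hne : ((m : ℚ) + 1) ≠ 0 := by positivity
        have := mul_eq_zero.mp h1
        rcases this with h | h
        · exact h
        · exact absurd (by push_cast at h ⊢; linarith) hne
  have := key k hk
  rw [map_sub] at this
  linarith
end

section
/- For every partition λ of n with length l(λ), the coefficient [h_λ]ρ_n, regarded as a polynomial in q, lies in (-1)^{l(λ)-1}·ℕ[q]·(q-1); that is, (-1)^{l(λ)-1}[h_λ]ρ_n is divisible by (q-1) with quotient a polynomial in q having nonnegative integer coefficients. -/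
open MvPolynomial Finset

noncomputable section

/-- The coefficient field `ℚ(q)`, with `q` an indeterminate. -/
abbrev K : Type := RatFunc ℚ

noncomputable def q : K := RatFunc.X

/-- The ring of symmetric functions over `ℚ(q)`, realized as the polynomial ring on the
algebraically independent complete homogeneous symmetric functions `h_1, h_2, …`
(the variable `X n`, for `n ≥ 1`, represents `h_n`). -/
abbrev SymFn : Type := MvPolynomial ℕ K

/-- `h n` is the `n`-th complete homogeneous symmetric function (`h 0 = 1`). -/
noncomputable def h (n : ℕ) : SymFn := if n = 0 then 1 else X n

lemma aeval_map_nat (P : Polynomial ℕ) :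
    Polynomial.aeval q (P.map (Nat.castRingHom ℚ)) =
      Polynomial.eval₂ (algebraMap ℕ K) q P := by
  rw [Polynomial.aeval_def, Polynomial.eval₂_map]
  congr 1
  exact Subsingleton.elim _ _

lemma key (ρ : ℕ → SymFn)
    (hρ : ∀ n, 1 ≤ n →
      ρ n = C (q ^ n - 1) * h n - ∑ k ∈ Finset.Icc 1 (n - 1), ρ (n - k) * h k) :
    ∀ n, 1 ≤ n → ∀ lam : n.Partition,
    ∃ P : Polynomial ℕ,
      MvPolynomial.coeff (Multiset.toFinsupp lam.parts) (ρ n) =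
        (-1) ^ (Multiset.card lam.parts - 1) * (q - 1) *
          Polynomial.aeval q (P.map (Nat.castRingHom ℚ)) := by
  intro n
  induction n using Nat.strong_induction_on with
  | _ n IH =>
  intro hn lam
  set μ : ℕ →₀ ℕ := Multiset.toFinsupp lam.parts with hμ
  have hsum : lam.parts.sum = n := lam.parts_sum
  have hpos : ∀ x ∈ lam.parts, 0 < x := fun x hx => lam.parts_pos hx
  have hcoeff : MvPolynomial.coeff μ (ρ n) =
      (q ^ n - 1) * MvPolynomial.coeff μ (X n) -
        ∑ k ∈ Finset.Icc 1 (n - 1),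
          (if k ∈ μ.support then
            MvPolynomial.coeff (μ - Finsupp.single k 1) (ρ (n - k)) else 0) := by
    rw [hρ n hn]
    rw [coeff_sub, MvPolynomial.coeff_sum]
    congr 1
    · have : h n = X n := by simp [h, Nat.one_le_iff_ne_zero.mp hn]
      rw [this, coeff_C_mul]
    · refine Finset.sum_congr rfl fun k hk => ?_
      have hk1 : k ≠ 0 := by
        simp only [Finset.mem_Icc] at hk; omega
      have : h k = X k := by simp [h, hk1]
      rw [this, coeff_mul_X']
  by_cases hcard : Multiset.card lam.parts = 1
  · -- lam.parts = {n}
    obtain ⟨a, ha⟩ := Multiset.card_eq_one.mp hcard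
    have han : a = n := by
      rw [ha] at hsum; simpa using hsum
    subst han
    have hμs : μ = Finsupp.single a 1 := by
      rw [hμ, ha, Multiset.toFinsupp_singleton]
    refine ⟨∑ i ∈ Finset.range a, Polynomial.X ^ i, ?_⟩
    have hXa : MvPolynomial.coeff μ (X a : SymFn) = 1 := by
      rw [hμs, MvPolynomial.coeff_X, if_pos rfl]
    have hzero : ∀ k ∈ Finset.Icc 1 (a - 1),
        (if k ∈ μ.support then
            MvPolynomial.coeff (μ - Finsupp.single k 1) (ρ (a - k)) else 0) = 0 := by
      intro k hk
      have hk' : k ≤ a - 1 := (Finset.mem_Icc.mp hk).2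
      have : k ∉ μ.support := by
        rw [hμs]
        intro hmem
        have := Finsupp.support_single_subset hmem
        simp only [Finset.mem_singleton] at this
        omega
      simp [this]
    rw [hcoeff, Finset.sum_congr rfl hzero, Finset.sum_const_zero, sub_zero, hXa, mul_one]
    rw [hcard]
    simp only [Nat.sub_self, pow_zero, one_mul]
    rw [aeval_map_nat]
    have : Polynomial.eval₂ (algebraMap ℕ K) q (∑ i ∈ Finset.range a, Polynomial.X ^ i)
        = ∑ i ∈ Finset.range a, q ^ i := by
      simp [Polynomial.eval₂_finset_sum]
    rw [this, ← geom_sum_mul q a, mul_comm]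
  · -- card ≥ 2
    have hcard2 : 2 ≤ Multiset.card lam.parts := by
      have h1 : lam.parts ≠ 0 := by
        intro h0; rw [h0] at hsum; simp at hsum; omega
      have : 1 ≤ Multiset.card lam.parts := by
        rwa [Nat.one_le_iff_ne_zero, Ne, Multiset.card_eq_zero]
      omega
    have hXn : MvPolynomial.coeff μ (X n : SymFn) = 0 := by
      rw [MvPolynomial.coeff_X']
      rw [if_neg]
      intro hEq
      have : lam.parts = ({n} : Multiset ℕ) := by
        apply Multiset.toFinsupp.injective
        rw [← hμ, ← hEq, Multiset.toFinsupp_singleton]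
      rw [this] at hcard2
      simp at hcard2
    -- each summand
    have hterm : ∀ k ∈ Finset.Icc 1 (n - 1),
        ∃ Pk : Polynomial ℕ,
          (if k ∈ μ.support then
              MvPolynomial.coeff (μ - Finsupp.single k 1) (ρ (n - k)) else 0) =
            (-1) ^ (Multiset.card lam.parts - 2) * (q - 1) *
              Polynomial.aeval q (Pk.map (Nat.castRingHom ℚ)) := by
      intro k hk
      by_cases hks : k ∈ μ.support
      · have hkmem : k ∈ lam.parts := by
          rw [hμ] at hks
          simpa [Multiset.toFinsupp_apply, Finsupp.mem_support_iff,
            Multiset.count_ne_zero] using hks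
        have hk1 : 1 ≤ k := hpos k hkmem
        have hcons : k ::ₘ lam.parts.erase k = lam.parts := Multiset.cons_erase hkmem
        have hesum : (lam.parts.erase k).sum = n - k ∧ k ≤ n := by
          have h2 : k + (lam.parts.erase k).sum = lam.parts.sum := by
            conv_rhs => rw [← hcons]
            rw [Multiset.sum_cons]
          omega
        have hecard : Multiset.card (lam.parts.erase k) = Multiset.card lam.parts - 1 := by
          rw [← hcons]; simp
        have hene : lam.parts.erase k ≠ 0 := by
          intro h0
          rw [h0] at hecard
          simp at hecard
          omega
        obtain ⟨j, hj⟩ := Multiset.exists_mem_of_ne_zero hene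
        have hjpos : 0 < j := hpos j (Multiset.mem_of_mem_erase hj)
        have hesum1 : 1 ≤ n - k := by
          have hle : j ≤ (lam.parts.erase k).sum := Multiset.le_sum_of_mem hj
          omega
        set mu' : (n - k).Partition :=
          ⟨lam.parts.erase k, fun hx => hpos _ (Multiset.mem_of_mem_erase hx), hesum.1⟩
          with hmu'
        have hnk : n - k < n := by omega
        obtain ⟨Pk, hPk⟩ := IH (n - k) hnk hesum1 mu'
        refine ⟨Pk, ?_⟩
        rw [if_pos hks]
        have hμe : μ - Finsupp.single k 1 = Multiset.toFinsupp (lam.parts.erase k) := by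
          have hμ2 : μ = Finsupp.single k 1 + Multiset.toFinsupp (lam.parts.erase k) := by
            rw [hμ]
            conv_lhs => rw [← hcons]
            rw [← Multiset.singleton_add, Multiset.toFinsupp_add, Multiset.toFinsupp_singleton]
          rw [hμ2, add_tsub_cancel_left]
        rw [hμe]
        have : mu'.parts = lam.parts.erase k := rfl
        rw [← this, hPk, this, hecard]
        congr 2
      · exact ⟨0, by simp [hks]⟩
    choose! F hF using hterm
    refine ⟨∑ k ∈ Finset.Icc 1 (n - 1), F k, ?_⟩
    rw [hcoeff, hXn, mul_zero, zero_sub, Finset.sum_congr rfl hF]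
    rw [← Finset.mul_sum]
    have hmapsum : Polynomial.aeval q
        ((∑ k ∈ Finset.Icc 1 (n - 1), F k).map (Nat.castRingHom ℚ)) =
        ∑ k ∈ Finset.Icc 1 (n - 1),
          Polynomial.aeval q ((F k).map (Nat.castRingHom ℚ)) := by
      rw [Polynomial.map_sum, map_sum]
    rw [hmapsum]
    obtain ⟨m, hm⟩ : ∃ m, Multiset.card lam.parts = m + 2 := ⟨Multiset.card lam.parts - 2, by omega⟩
    rw [hm, show m + 2 - 1 = m + 1 from rfl, show m + 2 - 2 = m from rfl, pow_succ]
    ring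

/-- For every partition `λ` of `n`, the coefficient `[h_λ]ρ_n ∈ ℚ(q)` lies in
`(-1)^{ℓ(λ)-1} · ℕ[q] · (q-1)`: there is a polynomial `P` with nonnegative integer
coefficients such that `[h_λ]ρ_n = (-1)^{ℓ(λ)-1} (q-1) P(q)`. -/
theorem stmt_8 (ρ : ℕ → SymFn) (hρ0 : ρ 0 = 1)
    (hρ : ∀ n, 1 ≤ n →
      ρ n = C (q ^ n - 1) * h n - ∑ k ∈ Finset.Icc 1 (n - 1), ρ (n - k) * h k)
    (n : ℕ) (hn : 1 ≤ n) (lam : n.Partition) :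
    ∃ P : Polynomial ℕ,
      MvPolynomial.coeff (Multiset.toFinsupp lam.parts) (ρ n) =
        (-1) ^ (Multiset.card lam.parts - 1) * (q - 1) *
          Polynomial.aeval q (P.map (Nat.castRingHom ℚ)) := by
  exact key ρ hρ n hn lam

end
end
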